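/- Let φ : ℕ → ℝ≥0 be nondecreasing, concave, normalized, extended piecewise linearly to ℝ≥0, and suppose φ is linear from some ℓ ≥ 1: φ(x) = φ(ℓ) + a(x - ℓ) for all x ≥ ℓ, with 0 ≤ a ≤ φ(ℓ) - φ(ℓ-1). Then α_φ(x) = E[φ(Poi(x))]/φ(x) admits the closed form α_φ(x) = (φ(ℓ) + a(x-ℓ))/φ(x) - (e^{-x}/φ(x))·(∑_{k=0}^{ℓ} (φ(ℓ) + a(x-ℓ) - φ(k)) x^k/k! - a·x^{ℓ+1}/ℓ!), and α_φ is nondecreasing on [ℓ, ∞); consequently α_φ = min_{x ∈ {1,…,ℓ}} α_φ(x). -/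

import Mathlib

/-- The Poisson expectation `E[φ(Poi x)]`. -/
noncomputable def poiExp (φ : ℕ → ℝ) (x : ℝ) : ℝ :=
  ∑' k : ℕ, Real.exp (-x) * x ^ k / (Nat.factorial k) * φ k

/-- The piecewise linear extension of `φ : ℕ → ℝ` to `ℝ≥0`. -/
noncomputable def phiExt (φ : ℕ → ℝ) (x : ℝ) : ℝ :=
  φ ⌊x⌋₊ + (x - ⌊x⌋₊) * (φ (⌊x⌋₊ + 1) - φ ⌊x⌋₊)

/-- The Poisson concavity ratio `α_φ(x) = E[φ(Poi x)] / φ(x)`, with `α_φ(0) = 1`. -/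
noncomputable def alphaRatio (φ : ℕ → ℝ) (x : ℝ) : ℝ :=
  if x = 0 then 1 else poiExp φ x / phiExt φ x

lemma shift_eq (x : ℝ) : (fun k : ℕ => ((k:ℕ)+1:ℝ) * (x ^ (k+1) / (Nat.factorial (k+1))))
    = fun k : ℕ => x * (x ^ k / (Nat.factorial k)) := by
  funext k
  rw [Nat.factorial_succ]
  have h1 : (Nat.factorial k : ℝ) ≠ 0 := Nat.cast_ne_zero.2 k.factorial_ne_zero
  have h2 : ((k:ℝ) + 1) ≠ 0 := by positivity
  push_cast
  field_simp
  ring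

lemma aux_summable_k (x : ℝ) :
    Summable (fun k : ℕ => (k:ℝ) * (x ^ k / (Nat.factorial k))) := by
  rw [← summable_nat_add_iff 1]
  have := (Real.summable_pow_div_factorial x).mul_left x
  rw [← shift_eq x] at this
  convert this using 2 with k
  · rfl
  push_cast
  ring

lemma aux_tsum_exp (x : ℝ) : ∑' k : ℕ, x ^ k / (Nat.factorial k) = Real.exp x := by
  rw [Real.exp_eq_exp_ℝ, NormedSpace.exp_eq_tsum_div]

lemma aux_tsum_k (x : ℝ) :
    ∑' k : ℕ, (k:ℝ) * (x ^ k / (Nat.factorial k)) = x * Real.exp x := by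
  rw [Summable.tsum_eq_zero_add (aux_summable_k x)]
  simp only [Nat.cast_zero, zero_mul, zero_add]
  have h2 : ∑' k : ℕ, (((k+1:ℕ)):ℝ) * (x ^ (k+1) / (Nat.factorial (k+1)))
      = ∑' k : ℕ, x * (x ^ k / (Nat.factorial k)) := by
    apply tsum_congr
    intro k
    have := congrFun (shift_eq x) k
    push_cast at this ⊢
    exact this
  rw [h2, tsum_mul_left, aux_tsum_exp]

lemma keyIdentity (φ : ℕ → ℝ) (ℓ : ℕ) (a : ℝ)
    (hlin : ∀ k : ℕ, ℓ ≤ k → φ k = φ ℓ + a * ((k : ℝ) - (ℓ : ℝ)))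
    (x : ℝ) :
    poiExp φ x = (φ ℓ + a * (x - ℓ)) -
      ∑ k ∈ Finset.range (ℓ + 1),
        (φ ℓ + a * ((k:ℝ) - ℓ) - φ k) * (Real.exp (-x) * x ^ k / (Nat.factorial k)) := by
  set E := Real.exp (-x) with hE
  have hEexp : E * Real.exp x = 1 := by rw [hE, ← Real.exp_add]; simp
  set u : ℕ → ℝ := fun k => E * x ^ k / (Nat.factorial k) with hu
  have hufun : u = fun k => E * (x ^ k / (Nat.factorial k)) := by
    funext k; simp only [hu]; rw [mul_div_assoc]
  have hsu : Summable u := by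
    rw [hufun]; exact (Real.summable_pow_div_factorial x).mul_left E
  have htu : ∑' k : ℕ, u k = 1 := by
    rw [hufun, tsum_mul_left, aux_tsum_exp, hEexp]
  have hku : (fun k : ℕ => (k:ℝ) * u k) = fun k : ℕ => E * ((k:ℝ) * (x ^ k / (Nat.factorial k))) := by
    funext k; rw [hu]; ring
  have hsk : Summable (fun k : ℕ => (k:ℝ) * u k) := by
    rw [hku]; exact (aux_summable_k x).mul_left E
  have htk : ∑' k : ℕ, (k:ℝ) * u k = x := by
    rw [hku, tsum_mul_left, aux_tsum_k]
    calc E * (x * Real.exp x) = x * (E * Real.exp x) := by ring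
      _ = x := by rw [hEexp, mul_one]
  set d : ℕ → ℝ := fun k => φ ℓ + a * ((k:ℝ) - ℓ) - φ k with hd
  have hdzero : ∀ k, ℓ ≤ k → d k = 0 := by
    intro k hk; rw [hd]; simp only; rw [hlin k hk]; ring
  have hd0 : ∀ k ∉ Finset.range (ℓ + 1), u k * d k = 0 := by
    intro k hk
    have : ℓ ≤ k := by
      simp only [Finset.mem_range, not_lt] at hk; omega
    rw [hdzero k this, mul_zero]
  have hsd : Summable (fun k : ℕ => u k * d k) := summable_of_ne_finset_zero hd0
  have htd : ∑' k : ℕ, u k * d k = ∑ k ∈ Finset.range (ℓ+1), u k * d k := tsum_eq_sum hd0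
  have hfun : (fun k : ℕ => Real.exp (-x) * x ^ k / (Nat.factorial k) * φ k)
      = fun k : ℕ => (((φ ℓ - a * ℓ) * u k + a * ((k:ℝ) * u k)) - u k * d k) := by
    funext k; simp only [hu, hd, hE]; ring
  rw [poiExp, hfun, Summable.tsum_sub ((hsu.mul_left _).add (hsk.mul_left a)) hsd,
    Summable.tsum_add (hsu.mul_left _) (hsk.mul_left a), tsum_mul_left, tsum_mul_left, htu, htk, htd]
  congr 1
  · ring
  · apply Finset.sum_congr rfl
    intro k _
    simp only [hu, hd]
    ring

lemma tele (x : ℝ) (n : ℕ) :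
    ∑ k ∈ Finset.range (n+1), (x - k) * x ^ k / (Nat.factorial k)
      = x ^ (n+1) / (Nat.factorial n) := by
  induction n with
  | zero => simp
  | succ n ih =>
    rw [Finset.sum_range_succ, ih, Nat.factorial_succ]
    have h1 : (Nat.factorial n : ℝ) ≠ 0 := Nat.cast_ne_zero.2 n.factorial_ne_zero
    have h2 : ((n:ℝ) + 1) ≠ 0 := by positivity
    push_cast
    field_simp
    ring

lemma gconvert (φ : ℕ → ℝ) (ℓ : ℕ) (a : ℝ) (x : ℝ) :
    Real.exp (-x) *
      ((∑ k ∈ Finset.range (ℓ + 1), (φ ℓ + a * (x - ℓ) - φ k) * x ^ k / (Nat.factorial k)) -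
        a * x ^ (ℓ + 1) / (Nat.factorial ℓ))
    = ∑ k ∈ Finset.range (ℓ + 1),
        (φ ℓ + a * ((k:ℝ) - ℓ) - φ k) * (Real.exp (-x) * x ^ k / (Nat.factorial k)) := by
  have h1 : ∑ k ∈ Finset.range (ℓ + 1), (φ ℓ + a * (x - ℓ) - φ k) * x ^ k / (Nat.factorial k)
      = (∑ k ∈ Finset.range (ℓ + 1), (φ ℓ + a * ((k:ℝ) - ℓ) - φ k) * x ^ k / (Nat.factorial k))
        + ∑ k ∈ Finset.range (ℓ + 1), a * ((x - (k:ℝ)) * x ^ k / (Nat.factorial k)) := by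
    rw [← Finset.sum_add_distrib]
    apply Finset.sum_congr rfl
    intro k _
    ring
  rw [h1, ← Finset.mul_sum, tele, mul_div_assoc, add_sub_cancel_right, Finset.mul_sum]
  have h3 : ∀ k ∈ Finset.range (ℓ + 1),
      Real.exp (-x) * ((φ ℓ + a * ((k:ℝ) - ℓ) - φ k) * x ^ k / (Nat.factorial k))
      = (φ ℓ + a * ((k:ℝ) - ℓ) - φ k) * (Real.exp (-x) * x ^ k / (Nat.factorial k)) := by
    intro k _; ring
  exact Finset.sum_congr rfl h3

lemma sum_shift (d : ℕ → ℝ) (ℓ : ℕ) (E x : ℝ) (hdz : d (ℓ+1) = 0) :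
    ∑ k ∈ Finset.range (ℓ+1), d k * ((E * ((k:ℝ) * x ^ (k-1)) - E * x ^ k) / (Nat.factorial k))
    = ∑ k ∈ Finset.range (ℓ+1), (d (k+1) - d k) * (E * x ^ k / (Nat.factorial k)) := by
  have hsplit : ∑ k ∈ Finset.range (ℓ+1),
        d k * ((E * ((k:ℝ) * x ^ (k-1)) - E * x ^ k) / (Nat.factorial k))
      = (∑ k ∈ Finset.range (ℓ+1), d k * (E * ((k:ℝ) * x ^ (k-1)) / (Nat.factorial k)))
        - ∑ k ∈ Finset.range (ℓ+1), d k * (E * x ^ k / (Nat.factorial k)) := by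
    rw [← Finset.sum_sub_distrib]
    apply Finset.sum_congr rfl
    intro k _
    ring
  have hA : ∑ k ∈ Finset.range (ℓ+1), d k * (E * ((k:ℝ) * x ^ (k-1)) / (Nat.factorial k))
      = ∑ k ∈ Finset.range (ℓ+1), d (k+1) * (E * x ^ k / (Nat.factorial k)) := by
    rw [Finset.sum_range_succ' (fun k => d k * (E * ((k:ℝ) * x ^ (k-1)) / (Nat.factorial k))) ℓ]
    rw [Finset.sum_range_succ (fun k => d (k+1) * (E * x ^ k / (Nat.factorial k))) ℓ]
    simp only [Nat.cast_zero, zero_mul, mul_zero, zero_div, add_zero, hdz, zero_mul]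
    apply Finset.sum_congr rfl
    intro k _
    have h1 : (Nat.factorial k : ℝ) ≠ 0 := Nat.cast_ne_zero.2 k.factorial_ne_zero
    have h2 : ((k:ℝ) + 1) ≠ 0 := by positivity
    have h3 : k + 1 - 1 = k := rfl
    rw [h3, Nat.factorial_succ]
    push_cast
    field_simp
  rw [hsplit, hA, ← Finset.sum_sub_distrib]
  apply Finset.sum_congr rfl
  intro k _
  ring

/-- If `φ` is linear from `ℓ` with slope `a`, then `α_φ` has an explicit closed form,
is nondecreasing on `[ℓ, ∞)`, and consequently `α_φ = min_{x ∈ {1,…,ℓ}} α_φ(x)`. -/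
theorem stmt17 (φ : ℕ → ℝ) (hφnn : ∀ k, 0 ≤ φ k) (hφ0 : φ 0 = 0) (hφ1 : φ 1 = 1)
    (hφmono : Monotone φ)
    (hφconc : ∀ k, φ (k + 2) - φ (k + 1) ≤ φ (k + 1) - φ k)
    (ℓ : ℕ) (hℓ : 1 ≤ ℓ) (a : ℝ) (ha0 : 0 ≤ a) (ha1 : a ≤ φ ℓ - φ (ℓ - 1))
    (hlin : ∀ k : ℕ, ℓ ≤ k → φ k = φ ℓ + a * ((k : ℝ) - (ℓ : ℝ))) :
    (∀ x : ℝ, 0 < x →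
        alphaRatio φ x =
          (φ ℓ + a * (x - ℓ)) / phiExt φ x -
            Real.exp (-x) / phiExt φ x *
              ((∑ k ∈ Finset.range (ℓ + 1),
                  (φ ℓ + a * (x - ℓ) - φ k) * x ^ k / (Nat.factorial k)) -
                a * x ^ (ℓ + 1) / (Nat.factorial ℓ))) ∧
      MonotoneOn (alphaRatio φ) (Set.Ici (ℓ : ℝ)) ∧
      ∃ n : ℕ, 1 ≤ n ∧ n ≤ ℓ ∧
        ∀ j : ℕ, 1 ≤ j → alphaRatio φ (n : ℝ) ≤ alphaRatio φ (j : ℝ) := by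
  -- basic facts
  have hψ : Antitone (fun k => φ (k+1) - φ k) :=
    antitone_nat_of_succ_le fun k => hφconc k
  have hslope : ∀ k, a ≤ φ (k+1) - φ k := by
    intro k
    rcases le_or_gt ℓ k with h | h
    · have h1 := hlin k h
      have h2 := hlin (k+1) (le_trans h (Nat.le_succ k))
      have : φ (k+1) - φ k = a := by rw [h1, h2]; push_cast; ring
      linarith
    · have hk1 : k ≤ ℓ - 1 := by omega
      have h2 := hψ hk1
      simp only at h2
      have h3 : ℓ - 1 + 1 = ℓ := by omega
      rw [h3] at h2
      linarith
  have hdnn : ∀ k : ℕ, 0 ≤ φ ℓ + a * ((k:ℝ) - ℓ) - φ k := by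
    have key : ∀ (m k : ℕ), φ k + a * m ≤ φ (k + m) := by
      intro m
      induction m with
      | zero => intro k; simp
      | succ m ih =>
        intro k
        have h1 := ih k
        have h2 := hslope (k + m)
        have h3 : k + (m+1) = (k+m)+1 := by omega
        rw [h3]
        push_cast
        push_cast at h1
        linarith
    intro k
    rcases le_or_gt ℓ k with h | h
    · rw [hlin k h]; ring_nf; linarith
    · have hkey := key (ℓ - k) k
      rw [Nat.add_sub_cancel' h.le] at hkey
      have hc : ((ℓ - k : ℕ) : ℝ) = (ℓ:ℝ) - k := by
        rw [Nat.cast_sub h.le]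
      rw [hc] at hkey
      linarith
  have hφℓ1 : (1:ℝ) ≤ φ ℓ := by
    have := hφmono hℓ
    rw [hφ1] at this
    exact this
  have hPlin : ∀ x : ℝ, (ℓ:ℝ) ≤ x → phiExt φ x = φ ℓ + a * (x - ℓ) := by
    intro x hx
    have hfl : ℓ ≤ ⌊x⌋₊ := Nat.le_floor hx
    rw [phiExt, hlin _ hfl, hlin _ (le_trans hfl (Nat.le_succ _))]
    push_cast
    ring
  have hPpos : ∀ x : ℝ, 0 < x → 0 < phiExt φ x := by
    intro x hx
    rcases Nat.eq_zero_or_pos ⌊x⌋₊ with h | h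
    · rw [phiExt, h]
      simpa [hφ0, hφ1] using hx
    · have h1 : (1:ℝ) ≤ φ ⌊x⌋₊ := by
        have := hφmono h
        rw [hφ1] at this
        exact this
      have h2 : (⌊x⌋₊:ℝ) ≤ x := Nat.floor_le hx.le
      have h3 : φ ⌊x⌋₊ ≤ φ (⌊x⌋₊ + 1) := hφmono (Nat.le_succ _)
      rw [phiExt]
      nlinarith
  have hLpos : ∀ x : ℝ, (ℓ:ℝ) ≤ x → 0 < φ ℓ + a * (x - ℓ) := by
    intro x hx
    nlinarith
  -- part 1
  have part1 : ∀ x : ℝ, 0 < x →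
      alphaRatio φ x =
        (φ ℓ + a * (x - ℓ)) / phiExt φ x -
          Real.exp (-x) / phiExt φ x *
            ((∑ k ∈ Finset.range (ℓ + 1),
                (φ ℓ + a * (x - ℓ) - φ k) * x ^ k / (Nat.factorial k)) -
              a * x ^ (ℓ + 1) / (Nat.factorial ℓ)) := by
    intro x hx
    rw [alphaRatio, if_neg hx.ne', keyIdentity φ ℓ a hlin x, ← gconvert φ ℓ a x, sub_div,
      div_mul_eq_mul_div]
  -- the q function and its properties
  have hqnn : ∀ x : ℝ, 0 ≤ x → 0 ≤ ∑ k ∈ Finset.range (ℓ+1),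
      (φ ℓ + a * ((k:ℝ) - ℓ) - φ k) * (Real.exp (-x) * x ^ k / (Nat.factorial k)) := by
    intro x hx
    apply Finset.sum_nonneg
    intro k _
    apply mul_nonneg (hdnn k)
    positivity
  have hq' : ∀ x : ℝ, HasDerivAt (fun y : ℝ => ∑ k ∈ Finset.range (ℓ+1),
        (φ ℓ + a * ((k:ℝ) - ℓ) - φ k) * (Real.exp (-y) * y ^ k / (Nat.factorial k)))
      (∑ k ∈ Finset.range (ℓ+1),
        (a - (φ (k+1) - φ k)) * (Real.exp (-x) * x ^ k / (Nat.factorial k))) x := by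
    intro x
    have hterm : ∀ k ∈ Finset.range (ℓ+1),
        HasDerivAt (fun y : ℝ => (φ ℓ + a * ((k:ℝ) - ℓ) - φ k) *
            (Real.exp (-y) * y ^ k / (Nat.factorial k)))
          ((φ ℓ + a * ((k:ℝ) - ℓ) - φ k) *
            ((Real.exp (-x) * ((k:ℝ) * x ^ (k-1)) - Real.exp (-x) * x ^ k) / (Nat.factorial k))) x := by
      intro k _
      have he : HasDerivAt (fun y : ℝ => Real.exp (-y)) (-Real.exp (-x)) x := by
        simpa using (hasDerivAt_neg x).exp
      have hp := hasDerivAt_pow k x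
      have hmul := (he.fun_mul hp).div_const (Nat.factorial k : ℝ)
      have := hmul.const_mul (φ ℓ + a * ((k:ℝ) - ℓ) - φ k)
      convert this using 1
      · rfl
      · rfl
      ring
    have hsum := HasDerivAt.fun_sum hterm
    have heq : ∑ k ∈ Finset.range (ℓ+1),
        (φ ℓ + a * ((k:ℝ) - ℓ) - φ k) *
          ((Real.exp (-x) * ((k:ℝ) * x ^ (k-1)) - Real.exp (-x) * x ^ k) / (Nat.factorial k))
        = ∑ k ∈ Finset.range (ℓ+1),
          (a - (φ (k+1) - φ k)) * (Real.exp (-x) * x ^ k / (Nat.factorial k)) := by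
      rw [sum_shift (fun k => φ ℓ + a * ((k:ℝ) - ℓ) - φ k) ℓ (Real.exp (-x)) x
        (by rw [hlin (ℓ+1) (Nat.le_succ ℓ)]; push_cast; ring)]
      apply Finset.sum_congr rfl
      intro k _
      have : (φ ℓ + a * (((k+1:ℕ):ℝ) - ℓ) - φ (k+1)) - (φ ℓ + a * ((k:ℝ) - ℓ) - φ k)
          = a - (φ (k+1) - φ k) := by push_cast; ring
      rw [this]
    rw [← heq]
    exact hsum
  have hq'le : ∀ x : ℝ, 0 ≤ x → (∑ k ∈ Finset.range (ℓ+1),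
      (a - (φ (k+1) - φ k)) * (Real.exp (-x) * x ^ k / (Nat.factorial k))) ≤ 0 := by
    intro x hx
    apply Finset.sum_nonpos
    intro k _
    apply mul_nonpos_of_nonpos_of_nonneg
    · linarith [hslope k]
    · positivity
  -- monotonicity of the explicit function
  have hL' : ∀ x : ℝ, HasDerivAt (fun y : ℝ => φ ℓ + a * (y - ℓ)) a x := by
    intro x
    simpa using (((hasDerivAt_id x).sub_const (ℓ:ℝ)).const_mul a).const_add (φ ℓ)
  have hAderiv : ∀ x : ℝ, (ℓ:ℝ) ≤ x →
      HasDerivAt (fun y : ℝ => ((φ ℓ + a * (y - ℓ)) - ∑ k ∈ Finset.range (ℓ+1),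
          (φ ℓ + a * ((k:ℝ) - ℓ) - φ k) * (Real.exp (-y) * y ^ k / (Nat.factorial k))) /
          (φ ℓ + a * (y - ℓ)))
        (((a - ∑ k ∈ Finset.range (ℓ+1),
            (a - (φ (k+1) - φ k)) * (Real.exp (-x) * x ^ k / (Nat.factorial k))) *
            (φ ℓ + a * (x - ℓ)) -
          ((φ ℓ + a * (x - ℓ)) - ∑ k ∈ Finset.range (ℓ+1),
            (φ ℓ + a * ((k:ℝ) - ℓ) - φ k) * (Real.exp (-x) * x ^ k / (Nat.factorial k))) * a) /
          (φ ℓ + a * (x - ℓ)) ^ 2) x := by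
    intro x hx
    exact ((hL' x).sub (hq' x)).div (hL' x) (hLpos x hx).ne'
  have hℓpos : (0:ℝ) < (ℓ:ℝ) := by exact_mod_cast hℓ
  have hmonoA : MonotoneOn (fun y : ℝ => ((φ ℓ + a * (y - ℓ)) - ∑ k ∈ Finset.range (ℓ+1),
      (φ ℓ + a * ((k:ℝ) - ℓ) - φ k) * (Real.exp (-y) * y ^ k / (Nat.factorial k))) /
      (φ ℓ + a * (y - ℓ))) (Set.Ici (ℓ:ℝ)) := by
    apply monotoneOn_of_deriv_nonneg (convex_Ici _)
    · intro x hx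
      exact (hAderiv x hx).continuousAt.continuousWithinAt
    · intro x hx
      rw [interior_Ici] at hx
      exact (hAderiv x hx.le).differentiableAt.differentiableWithinAt
    · intro x hx
      rw [interior_Ici] at hx
      rw [(hAderiv x hx.le).deriv]
      apply div_nonneg _ (sq_nonneg _)
      have h1 := hq'le x (le_trans hℓpos.le hx.le)
      have h2 := hqnn x (le_trans hℓpos.le hx.le)
      have h3 := hLpos x hx.le
      nlinarith
  have heq : Set.EqOn (fun y : ℝ => ((φ ℓ + a * (y - ℓ)) - ∑ k ∈ Finset.range (ℓ+1),
      (φ ℓ + a * ((k:ℝ) - ℓ) - φ k) * (Real.exp (-y) * y ^ k / (Nat.factorial k))) /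
      (φ ℓ + a * (y - ℓ))) (alphaRatio φ) (Set.Ici (ℓ:ℝ)) := by
    intro x hx
    have hx0 : 0 < x := lt_of_lt_of_le hℓpos hx
    simp only
    rw [alphaRatio, if_neg hx0.ne', keyIdentity φ ℓ a hlin x, hPlin x hx]
  have hmono : MonotoneOn (alphaRatio φ) (Set.Ici (ℓ:ℝ)) := hmonoA.congr heq
  refine ⟨part1, hmono, ?_⟩
  obtain ⟨n, hn_mem, hn_min⟩ := Finset.exists_min_image (Finset.Icc 1 ℓ)
    (fun n => alphaRatio φ n) ⟨ℓ, Finset.mem_Icc.2 ⟨hℓ, le_refl ℓ⟩⟩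
  rw [Finset.mem_Icc] at hn_mem
  refine ⟨n, hn_mem.1, hn_mem.2, ?_⟩
  intro j hj
  rcases le_or_gt j ℓ with h | h
  · exact hn_min j (Finset.mem_Icc.2 ⟨hj, h⟩)
  · have h1 := hn_min ℓ (Finset.mem_Icc.2 ⟨hℓ, le_refl ℓ⟩)
    have h2 : alphaRatio φ (ℓ:ℝ) ≤ alphaRatio φ (j:ℝ) := by
      apply hmono (Set.mem_Ici.2 le_rfl) (Set.mem_Ici.2 (by exact_mod_cast h.le))
      exact_mod_cast h.le
    linarith
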